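/- Let α : ℕ → ℕ satisfy α(n)/n → 0, and write x = x_{n,α}(1), a = α(n). Then, as n → ∞: (i) h̃''_{n,α}(1) = −(n/a)·∑_{j=0}^{∞} ( 1/( a·(x−1) + a·x/n ) )^j + O(1), the geometric series being convergent for large n; and (ii) if moreover a ≥ 2 for all large n, then h̃''_{n,α}(1) = −(n/a)·∑_{j=0}^{2} ( 1/( a·(x−1) ) )^j + o( n/( a³·(x−1)² ) ) + O(1). -/

import Mathlib

set_option maxHeartbeats 1000000

open Filter Real Asymptotics Finset Topology

namespace Stmt17

noncomputable section

def pp (a : ℕ) (t : ℝ) : ℝ := ∑ j ∈ Icc 1 a, t ^ j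
def q1 (a : ℕ) (t : ℝ) : ℝ := ∑ j ∈ Icc 1 a, t ^ (j-1)
def p1 (a : ℕ) (t : ℝ) : ℝ := ∑ j ∈ Icc 1 a, (j:ℝ) * t ^ (j-1)
def p2 (a : ℕ) (t : ℝ) : ℝ := ∑ j ∈ Icc 1 a, (j:ℝ)*((j:ℝ)-1) * t ^ (j-2)
def qq (a : ℕ) (t : ℝ) : ℝ := ∑ j ∈ Icc 1 a, t ^ j / j
def TT (a : ℕ) (t : ℝ) : ℝ := ∑ j ∈ Icc 1 a, (j:ℝ) * t ^ j
def T1 (a : ℕ) (t : ℝ) : ℝ := ∑ j ∈ Icc 1 a, (j:ℝ)^2 * t ^ (j-1)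
def T2 (a : ℕ) (t : ℝ) : ℝ := ∑ j ∈ Icc 1 a, (j:ℝ)^2*((j:ℝ)-1) * t ^ (j-2)

lemma hasDerivAt_pp (a : ℕ) (t : ℝ) : HasDerivAt (pp a) (p1 a t) t := by
  apply HasDerivAt.fun_sum fun j hj => ?_
  exact hasDerivAt_pow j t

lemma hasDerivAt_qq (a : ℕ) (t : ℝ) : HasDerivAt (qq a) (q1 a t) t := by
  apply HasDerivAt.fun_sum fun j hj => ?_
  simp only [Finset.mem_Icc] at hj
  have h := (hasDerivAt_pow j t).div_const (j : ℝ)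
  have hj0 : (j:ℝ) ≠ 0 := Nat.cast_ne_zero.mpr (by omega)
  refine h.congr_deriv ?_
  field_simp

lemma hasDerivAt_p1 (a : ℕ) (t : ℝ) : HasDerivAt (p1 a) (p2 a t) t := by
  apply HasDerivAt.fun_sum fun j hj => ?_
  simp only [Finset.mem_Icc] at hj
  have h := (hasDerivAt_pow (j-1) t).const_mul (j : ℝ)
  refine h.congr_deriv ?_
  have : ((j-1 : ℕ) : ℝ) = (j:ℝ) - 1 := by
    have := hj.1; push_cast [Nat.cast_sub this]; ring
  rw [this]
  have : j - 1 - 1 = j - 2 := by omega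
  rw [this]; ring

lemma hasDerivAt_TT (a : ℕ) (t : ℝ) : HasDerivAt (TT a) (T1 a t) t := by
  apply HasDerivAt.fun_sum fun j hj => ?_
  have h := (hasDerivAt_pow j t).const_mul (j : ℝ)
  refine h.congr_deriv ?_; ring

lemma hasDerivAt_T1 (a : ℕ) (t : ℝ) : HasDerivAt (T1 a) (T2 a t) t := by
  apply HasDerivAt.fun_sum fun j hj => ?_
  simp only [Finset.mem_Icc] at hj
  have h := (hasDerivAt_pow (j-1) t).const_mul ((j : ℝ)^2)
  refine h.congr_deriv ?_
  have h1 : ((j-1 : ℕ) : ℝ) = (j:ℝ) - 1 := by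
    have := hj.1; push_cast [Nat.cast_sub this]; ring
  have h2 : j - 1 - 1 = j - 2 := by omega
  rw [h1, h2]; ring

lemma id_TT_p1 (a : ℕ) (t : ℝ) : TT a t = t * p1 a t := by
  unfold TT p1
  rw [Finset.mul_sum]
  refine Finset.sum_congr rfl fun j hj => ?_
  simp only [Finset.mem_Icc] at hj
  have hj1 : j - 1 + 1 = j := by omega
  calc (j:ℝ) * t ^ j = (j:ℝ) * t ^ (j-1+1) := by rw [hj1]
    _ = t * ((j:ℝ) * t ^ (j-1)) := by rw [pow_succ]; ring

lemma id_q1 (a : ℕ) (t : ℝ) : t * q1 a t = pp a t := by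
  unfold pp q1
  rw [Finset.mul_sum]
  refine Finset.sum_congr rfl fun j hj => ?_
  simp only [Finset.mem_Icc] at hj
  have hj1 : j - 1 + 1 = j := by omega
  calc t * t ^ (j-1) = t ^ (j-1+1) := by rw [pow_succ]; ring
    _ = t ^ j := by rw [hj1]

lemma id_geom (a : ℕ) (t : ℝ) : (t - 1) * pp a t = t ^ (a+1) - t := by
  induction a with
  | zero => simp [pp]
  | succ a ih =>
    have h : pp (a+1) t = pp a t + t^(a+1) := by
      unfold pp; rw [Finset.sum_Icc_succ_top (by omega)]
    rw [h, mul_add, ih]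
    ring

lemma id_TTgeom (a : ℕ) (t : ℝ) : (t - 1) * TT a t = a * t ^ (a+1) - pp a t := by
  induction a with
  | zero => simp [TT, pp]
  | succ a ih =>
    have h : TT (a+1) t = TT a t + (a+1) * t^(a+1) := by
      unfold TT; rw [Finset.sum_Icc_succ_top (by omega)]; push_cast; ring
    have h2 : pp (a+1) t = pp a t + t^(a+1) := by
      unfold pp; rw [Finset.sum_Icc_succ_top (by omega)]
    rw [h, h2, mul_add, ih]
    push_cast
    ring

lemma pp_pos {a : ℕ} {t : ℝ} (ha : 1 ≤ a) (ht : 0 < t) : 0 < pp a t := by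
  apply Finset.sum_pos (fun j hj => pow_pos ht j)
  exact ⟨1, Finset.mem_Icc.mpr ⟨le_refl 1, ha⟩⟩

lemma p1_pos {a : ℕ} {t : ℝ} (ha : 1 ≤ a) (ht : 0 < t) : 0 < p1 a t := by
  apply Finset.sum_pos (fun j hj => ?_) ⟨1, Finset.mem_Icc.mpr ⟨le_refl 1, ha⟩⟩
  simp only [Finset.mem_Icc] at hj
  have : (0:ℝ) < j := by exact_mod_cast hj.1
  positivity

lemma TT_pos {a : ℕ} {t : ℝ} (ha : 1 ≤ a) (ht : 0 < t) : 0 < TT a t := by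
  apply Finset.sum_pos (fun j hj => ?_) ⟨1, Finset.mem_Icc.mpr ⟨le_refl 1, ha⟩⟩
  simp only [Finset.mem_Icc] at hj
  have : (0:ℝ) < j := by exact_mod_cast hj.1
  positivity

lemma p2_nonneg {a : ℕ} {t : ℝ} (ht : 0 ≤ t) : 0 ≤ p2 a t := by
  apply Finset.sum_nonneg fun j hj => ?_
  simp only [Finset.mem_Icc] at hj
  have h1 : (1:ℝ) ≤ j := by exact_mod_cast hj.1
  have h2 := pow_nonneg ht (j-2)
  have h3 : (0:ℝ) ≤ (j:ℝ)*((j:ℝ)-1) := mul_nonneg (by linarith) (by linarith)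
  exact mul_nonneg h3 h2

lemma T1_nonneg {a : ℕ} {t : ℝ} (ht : 0 ≤ t) : 0 ≤ T1 a t := by
  apply Finset.sum_nonneg fun j hj => ?_
  have := pow_nonneg ht (j-1)
  positivity

lemma T2_nonneg {a : ℕ} {t : ℝ} (ht : 0 ≤ t) : 0 ≤ T2 a t := by
  apply Finset.sum_nonneg fun j hj => ?_
  simp only [Finset.mem_Icc] at hj
  have h1 : (1:ℝ) ≤ j := by exact_mod_cast hj.1
  have h2 := pow_nonneg ht (j-2)
  have h3 : (0:ℝ) ≤ (j:ℝ)^2*((j:ℝ)-1) := mul_nonneg (by positivity) (by linarith)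
  exact mul_nonneg h3 h2

lemma ineqT1 {a : ℕ} {x : ℝ} (hx : 1 ≤ x) : x * T1 a x ≤ a * TT a x := by
  unfold T1 TT
  rw [Finset.mul_sum, Finset.mul_sum]
  refine Finset.sum_le_sum fun j hj => ?_
  simp only [Finset.mem_Icc] at hj
  have hj1 : j - 1 + 1 = j := by omega
  have hx0 : (0:ℝ) ≤ x := by linarith
  have hp : x ^ (j-1) * x = x ^ j := by rw [← pow_succ, hj1]
  have hja : (j:ℝ) ≤ a := by exact_mod_cast hj.2
  have hj0 : (0:ℝ) ≤ j := by positivity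
  have hxj : (0:ℝ) ≤ x ^ j := pow_nonneg hx0 j
  have h1 : x * ((j:ℝ)^2 * x ^ (j-1)) = ((j:ℝ)*(j:ℝ)) * x ^ j := by rw [← hp]; ring
  rw [h1]
  have h2 : ((j:ℝ)*(j:ℝ)) * x ^ j ≤ ((a:ℝ)*(j:ℝ)) * x ^ j :=
    mul_le_mul_of_nonneg_right (mul_le_mul_of_nonneg_right hja hj0) hxj
  calc ((j:ℝ)*(j:ℝ)) * x ^ j ≤ ((a:ℝ)*(j:ℝ)) * x ^ j := h2
    _ = (a:ℝ) * ((j:ℝ) * x ^ j) := by ring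

lemma ineqT2 {a : ℕ} {x : ℝ} (hx : 1 ≤ x) : x^2 * T2 a x ≤ (a:ℝ)^2 * TT a x := by
  unfold T2 TT
  rw [Finset.mul_sum, Finset.mul_sum]
  refine Finset.sum_le_sum fun j hj => ?_
  simp only [Finset.mem_Icc] at hj
  have hx0 : (0:ℝ) ≤ x := by linarith
  have hja : (j:ℝ) ≤ a := by exact_mod_cast hj.2
  have hxj : (0:ℝ) ≤ x ^ j := pow_nonneg hx0 j
  rcases Nat.lt_or_ge j 2 with h2 | h2
  · have : j = 1 := by omega
    subst this
    simp
    positivity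
  · have hj2 : j - 2 + 2 = j := by omega
    have hp : x ^ (j-2) * x^2 = x ^ j := by rw [← pow_add, hj2]
    have hj1 : (1:ℝ) ≤ j := by exact_mod_cast hj.1
    have h1 : x^2 * ((j:ℝ)^2 * ((j:ℝ)-1) * x ^ (j-2)) = ((j:ℝ)*((j:ℝ)-1)*(j:ℝ)) * x ^ j := by
      rw [← hp]; ring
    rw [h1]
    have ha0 : (0:ℝ) ≤ a := by linarith
    have hm : (j:ℝ)*((j:ℝ)-1) ≤ (a:ℝ)*(a:ℝ) :=
      mul_le_mul hja (by linarith) (by linarith) ha0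
    have hc : (j:ℝ)*((j:ℝ)-1)*(j:ℝ) ≤ (a:ℝ)^2*(j:ℝ) := by
      have := mul_le_mul hm hja (by linarith) (mul_nonneg ha0 ha0)
      nlinarith [this]
    calc ((j:ℝ)*((j:ℝ)-1)*(j:ℝ)) * x ^ j ≤ ((a:ℝ)^2*(j:ℝ)) * x ^ j :=
          mul_le_mul_of_nonneg_right hc hxj
      _ = (a:ℝ)^2 * ((j:ℝ) * x ^ j) := by ring

lemma ineqP2 {a : ℕ} {x : ℝ} (hx : 1 ≤ x) : x^2 * p2 a x ≤ (a:ℝ) * TT a x := by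
  unfold p2 TT
  rw [Finset.mul_sum, Finset.mul_sum]
  refine Finset.sum_le_sum fun j hj => ?_
  simp only [Finset.mem_Icc] at hj
  have hx0 : (0:ℝ) ≤ x := by linarith
  have hja : (j:ℝ) ≤ a := by exact_mod_cast hj.2
  have hxj : (0:ℝ) ≤ x ^ j := pow_nonneg hx0 j
  rcases Nat.lt_or_ge j 2 with h2 | h2
  · have : j = 1 := by omega
    subst this
    simp
    positivity
  · have hj2 : j - 2 + 2 = j := by omega
    have hp : x ^ (j-2) * x^2 = x ^ j := by rw [← pow_add, hj2]
    have hj1 : (1:ℝ) ≤ j := by exact_mod_cast hj.1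
    have h1 : x^2 * ((j:ℝ)*((j:ℝ)-1) * x ^ (j-2)) = (((j:ℝ)-1)*(j:ℝ)) * x ^ j := by
      rw [← hp]; ring
    rw [h1]
    have hc : ((j:ℝ)-1)*(j:ℝ) ≤ (a:ℝ)*(j:ℝ) := by nlinarith
    calc (((j:ℝ)-1)*(j:ℝ)) * x ^ j ≤ ((a:ℝ)*(j:ℝ)) * x ^ j :=
          mul_le_mul_of_nonneg_right hc hxj
      _ = (a:ℝ) * ((j:ℝ) * x ^ j) := by ring

lemma ineq_pp {a : ℕ} {x : ℝ} (hx : 1 ≤ x) : pp a x ≤ (a:ℝ) * x ^ a := by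
  unfold pp
  calc ∑ j ∈ Icc 1 a, x ^ j ≤ ∑ j ∈ Icc 1 a, x ^ a := by
        refine Finset.sum_le_sum fun j hj => ?_
        simp only [Finset.mem_Icc] at hj
        exact pow_le_pow_right₀ hx hj.2
    _ = (a:ℝ) * x ^ a := by
        rw [Finset.sum_const, Nat.card_Icc]
        simp [nsmul_eq_mul]

lemma pp_strictMono {a : ℕ} (ha : 1 ≤ a) {s t : ℝ} (hs : 0 ≤ s) (hst : s < t) :
    pp a s < pp a t := by
  apply Finset.sum_lt_sum_of_nonempty ⟨1, Finset.mem_Icc.mpr ⟨le_refl 1, ha⟩⟩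
  intro j hj
  simp only [Finset.mem_Icc] at hj
  exact pow_lt_pow_left₀ hst hs (by omega)

lemma pp_mono {a : ℕ} (ha : 1 ≤ a) {s t : ℝ} (hs : 0 ≤ s) (hst : s ≤ t) :
    pp a s ≤ pp a t := by
  rcases eq_or_lt_of_le hst with h | h
  · rw [h]
  · exact le_of_lt (pp_strictMono ha hs h)

section PerN

variable {a N : ℕ} {ξ : ℝ → ℝ}

def xid (a N : ℕ) (ξ : ℝ → ℝ) (w : ℝ) : ℝ := -(N:ℝ)/(w^2 * p1 a (ξ w))

def DD (a N : ℕ) (ξ : ℝ → ℝ) (w : ℝ) : ℝ :=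
  qq a (ξ w) - 1/(2*w) - 1/2 * (T1 a (ξ w)/TT a (ξ w) * xid a N ξ w)

def Eexpr (a N : ℕ) (x : ℝ) : ℝ :=
  -(N:ℝ)^2/(TT a x) + 1/2
  - (1/2)*( (T2 a x/TT a x - (T1 a x/TT a x)^2) * ((N:ℝ)/p1 a x)^2
      + (T1 a x/TT a x) * (2*(N:ℝ)/p1 a x - (N:ℝ)^2*p2 a x/(p1 a x)^3) )

variable (ha : 1 ≤ a) (hN : 1 ≤ N)
  (hξ : ∀ w : ℝ, 0 < w → 0 < ξ w ∧ pp a (ξ w) = N / w)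

include ha hN hξ

lemma xi_cont {w₀ : ℝ} (hw₀ : 0 < w₀) : ContinuousAt ξ w₀ := by
  obtain ⟨hx₀, hpx₀⟩ := hξ w₀ hw₀
  set x₀ := ξ w₀ with hx₀def
  rw [ContinuousAt, Metric.tendsto_nhds]
  intro ε hε
  set ε' := min ε (x₀/2) with hε'def
  have hε' : 0 < ε' := lt_min hε (by linarith)
  have hε'x : ε' ≤ x₀/2 := min_le_right _ _
  have hε'ε : ε' ≤ ε := min_le_left _ _
  have hlo : (0:ℝ) ≤ x₀ - ε' := by linarith
  have plo : pp a (x₀ - ε') < (N:ℝ)/w₀ := by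
    rw [← hpx₀]; exact pp_strictMono ha hlo (by linarith)
  have phi : (N:ℝ)/w₀ < pp a (x₀ + ε') := by
    rw [← hpx₀]; exact pp_strictMono ha (by linarith) (by linarith)
  have hcont : Tendsto (fun w => (N:ℝ)/w) (𝓝 w₀) (𝓝 ((N:ℝ)/w₀)) :=
    tendsto_const_nhds.div tendsto_id (ne_of_gt hw₀)
  have ev1 : ∀ᶠ w in 𝓝 w₀, pp a (x₀ - ε') < (N:ℝ)/w :=
    hcont.eventually (eventually_gt_nhds plo)
  have ev2 : ∀ᶠ w in 𝓝 w₀, (N:ℝ)/w < pp a (x₀ + ε') :=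
    hcont.eventually (eventually_lt_nhds phi)
  have ev0 : ∀ᶠ w in 𝓝 w₀, 0 < w := eventually_gt_nhds hw₀
  filter_upwards [ev0, ev1, ev2] with w h0 h1 h2
  obtain ⟨hxw, hpw⟩ := hξ w h0
  rw [Real.dist_eq]
  have hlt1 : x₀ - ε' < ξ w := by
    by_contra hcon
    push_neg at hcon
    have := pp_mono ha (le_of_lt hxw) hcon
    rw [hpw] at this
    linarith
  have hlt2 : ξ w < x₀ + ε' := by
    by_contra hcon
    push_neg at hcon
    have := pp_mono ha (by linarith : (0:ℝ) ≤ x₀ + ε') hcon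
    rw [hpw] at this
    linarith
  rw [abs_lt]
  constructor <;> linarith

lemma hasDerivAt_xi {w : ℝ} (hw : 0 < w) : HasDerivAt ξ (xid a N ξ w) w := by
  obtain ⟨hxw, hpw⟩ := hξ w hw
  have hN0 : (0:ℝ) < N := by exact_mod_cast hN
  have hp1 : 0 < p1 a (ξ w) := p1_pos ha hxw
  have hppos : 0 < pp a (ξ w) := pp_pos ha hxw
  have hf : HasDerivAt (fun t => (N:ℝ)/pp a t)
      ((0 * pp a (ξ w) - (N:ℝ) * p1 a (ξ w))/(pp a (ξ w))^2) (ξ w) :=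
    (hasDerivAt_const _ _).div (hasDerivAt_pp a (ξ w)) (ne_of_gt hppos)
  have hf' : (0 * pp a (ξ w) - (N:ℝ) * p1 a (ξ w))/(pp a (ξ w))^2 ≠ 0 := by
    rw [zero_mul, zero_sub]
    apply div_ne_zero
    · exact ne_of_lt (by nlinarith)
    · positivity
  have hfg : ∀ᶠ y in 𝓝 w, (N:ℝ)/pp a (ξ y) = y := by
    filter_upwards [eventually_gt_nhds hw] with y hy
    rw [(hξ y hy).2]
    field_simp
  have := HasDerivAt.of_local_left_inverse (xi_cont ha hN hξ hw) hf hf' hfg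
  refine this.congr_deriv ?_
  rw [hpw]
  unfold xid
  rw [zero_mul, zero_sub]
  have h2 : (-((N:ℝ) * p1 a (ξ w)) / ((N:ℝ)/w) ^ 2) = -(w^2 * p1 a (ξ w))/N := by
    field_simp
  rw [h2, inv_div]
  ring

lemma hasDerivAt_H {H : ℝ → ℝ}
    (hH : ∀ w : ℝ, 0 < w →
      H w = w * qq a (ξ w) - (N:ℝ) * Real.log (ξ w)
        - 1/2 * Real.log (2*π*w*TT a (ξ w)))
    {w : ℝ} (hw : 0 < w) : HasDerivAt H (DD a N ξ w) w := by
  obtain ⟨hxw, hpw⟩ := hξ w hw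
  have hN0 : (0:ℝ) < N := by exact_mod_cast hN
  have hp1 : 0 < p1 a (ξ w) := p1_pos ha hxw
  have hTT : 0 < TT a (ξ w) := TT_pos ha hxw
  have hX := hasDerivAt_xi ha hN hξ hw
  have hq1 : ξ w * q1 a (ξ w) = (N:ℝ)/w := by rw [id_q1, hpw]
  have c1 : HasDerivAt (fun w' => qq a (ξ w')) (q1 a (ξ w) * xid a N ξ w) w :=
    (hasDerivAt_qq a (ξ w)).comp w hX
  have t1 : HasDerivAt (fun w' => w' * qq a (ξ w'))
      (1 * qq a (ξ w) + w * (q1 a (ξ w) * xid a N ξ w)) w :=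
    (hasDerivAt_id w).mul c1
  have t2 : HasDerivAt (fun w' => (N:ℝ) * Real.log (ξ w'))
      ((N:ℝ) * (xid a N ξ w / ξ w)) w :=
    (hX.log (ne_of_gt hxw)).const_mul _
  have cTT : HasDerivAt (fun w' => TT a (ξ w')) (T1 a (ξ w) * xid a N ξ w) w :=
    (hasDerivAt_TT a (ξ w)).comp w hX
  have t3i : HasDerivAt (fun w' => 2*π*w'*TT a (ξ w'))
      ((2*π) * TT a (ξ w) + (2*π*w) * (T1 a (ξ w) * xid a N ξ w)) w := by
    have := ((hasDerivAt_id w).const_mul (2*π)).mul cTT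
    refine this.congr_deriv ?_
    simp only [id_eq]
    ring
  have hpos : 2*π*w*TT a (ξ w) ≠ 0 := by
    have := Real.pi_pos
    positivity
  have t3 : HasDerivAt (fun w' => 1/2 * Real.log (2*π*w'*TT a (ξ w')))
      (1/2 * (((2*π) * TT a (ξ w) + (2*π*w) * (T1 a (ξ w) * xid a N ξ w)) /
        (2*π*w*TT a (ξ w)))) w :=
    (t3i.log hpos).const_mul _
  have total := (t1.sub t2).sub t3
  have hev : H =ᶠ[𝓝 w] fun w' => w' * qq a (ξ w') - (N:ℝ) * Real.log (ξ w')
      - 1/2 * Real.log (2*π*w'*TT a (ξ w')) := by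
    filter_upwards [eventually_gt_nhds hw] with y hy
    exact hH y hy
  have final := total.congr_of_eventuallyEq hev
  refine final.congr_deriv ?_
  unfold DD xid
  have hq1' : q1 a (ξ w) = (N:ℝ)/(w * ξ w) := by
    field_simp
    field_simp at hq1
    linarith [hq1]
  rw [hq1']
  have hπ := Real.pi_ne_zero
  field_simp
  ring

lemma hasDerivAt_DD : HasDerivAt (DD a N ξ) (Eexpr a N (ξ 1)) 1 := by
  obtain ⟨hx, hpx⟩ := hξ 1 one_pos
  set x := ξ 1 with hxdef
  have hN0 : (0:ℝ) < N := by exact_mod_cast hN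
  have hp1 : 0 < p1 a x := p1_pos ha hx
  have hTT : 0 < TT a x := TT_pos ha hx
  have hX1v : xid a N ξ 1 = -(N:ℝ)/p1 a x := by
    unfold xid; norm_num; rfl
  have hX := hasDerivAt_xi ha hN hξ one_pos
  rw [hX1v] at hX
  set X1 := -(N:ℝ)/p1 a x with hX1def
  have c1 : HasDerivAt (fun w => qq a (ξ w)) (q1 a x * X1) 1 :=
    (hasDerivAt_qq a x).comp 1 hX
  have c2a : HasDerivAt (fun w : ℝ => 2*w) 2 1 := by
    simpa using (hasDerivAt_id (1:ℝ)).const_mul 2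
  have c2 : HasDerivAt (fun w : ℝ => 1/(2*w))
      ((0 * (2*1) - 1 * 2)/(2*1)^2) 1 :=
    (hasDerivAt_const _ _).div c2a (by norm_num)
  have cT1 : HasDerivAt (fun w => T1 a (ξ w)) (T2 a x * X1) 1 :=
    (hasDerivAt_T1 a x).comp 1 hX
  have cTT : HasDerivAt (fun w => TT a (ξ w)) (T1 a x * X1) 1 :=
    (hasDerivAt_TT a x).comp 1 hX
  have c3 : HasDerivAt (fun w => T1 a (ξ w)/TT a (ξ w))
      ((T2 a x * X1 * TT a x - T1 a x * (T1 a x * X1))/(TT a x)^2) 1 :=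
    cT1.div cTT (ne_of_gt hTT)
  have cp1 : HasDerivAt (fun w => p1 a (ξ w)) (p2 a x * X1) 1 :=
    (hasDerivAt_p1 a x).comp 1 hX
  have cden : HasDerivAt (fun w : ℝ => w^2 * p1 a (ξ w))
      ((2*1^1) * p1 a x + 1^2 * (p2 a x * X1)) 1 := by
    have := (hasDerivAt_pow 2 (1:ℝ)).mul cp1
    refine this.congr_deriv ?_
    rw [hxdef]; norm_num
  have hden : (1:ℝ)^2 * p1 a x ≠ 0 := by
    simp only [one_pow, one_mul]
    exact ne_of_gt hp1
  have c4 : HasDerivAt (fun w => xid a N ξ w)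
      ((0 * (1^2 * p1 a x) - (-(N:ℝ)) * ((2*1^1) * p1 a x + 1^2 * (p2 a x * X1)))
        / (1^2 * p1 a x)^2) 1 := by
    unfold xid
    exact (hasDerivAt_const _ _).div cden hden
  have total := (c1.sub c2).sub ((c3.mul c4).const_mul (1/2))
  rw [hX1v] at total
  have hDDfun : DD a N ξ = fun w => qq a (ξ w) - 1/(2*w)
      - 1/2 * (T1 a (ξ w)/TT a (ξ w) * xid a N ξ w) := rfl
  rw [hDDfun]
  refine total.congr_deriv ?_
  have hq1 : x * q1 a x = (N:ℝ) := by
    rw [id_q1, hpx]; norm_num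
  have hq1' : q1 a x = (N:ℝ)/x := by
    field_simp at hq1 ⊢
    linarith
  have hTTx : TT a x = x * p1 a x := id_TT_p1 a x
  rw [hq1']
  unfold Eexpr
  rw [hTTx]
  have hx0 : x ≠ 0 := ne_of_gt hx
  have hp10 : p1 a x ≠ 0 := ne_of_gt hp1
  simp only [hX1def]
  field_simp
  ring

theorem iteratedDeriv_eq {H : ℝ → ℝ}
    (hH : ∀ w : ℝ, 0 < w →
      H w = w * qq a (ξ w) - (N:ℝ) * Real.log (ξ w)
        - 1/2 * Real.log (2*π*w*TT a (ξ w))) :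
    iteratedDeriv 2 H 1 = Eexpr a N (ξ 1) := by
  have h2 : iteratedDeriv 2 H = deriv (deriv H) := by
    rw [iteratedDeriv_succ, iteratedDeriv_one]
  rw [h2]
  have hev : deriv H =ᶠ[𝓝 (1:ℝ)] DD a N ξ := by
    filter_upwards [eventually_gt_nhds one_pos] with w hw
    exact (hasDerivAt_H ha hN hξ hH hw).deriv
  rw [hev.deriv_eq]
  exact (hasDerivAt_DD ha hN hξ).deriv

end PerN

section Est

variable {a N : ℕ} {x : ℝ}
variable (ha : 1 ≤ a) (h8 : 8 * a ≤ N) (hx0 : 0 < x) (hpx : pp a x = N)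

include ha h8 hx0 hpx

lemma hx1 : 1 < x := by
  by_contra hcon
  push_neg at hcon
  have : pp a x ≤ a := by
    unfold pp
    calc ∑ j ∈ Icc 1 a, x ^ j ≤ ∑ j ∈ Icc 1 a, 1 := by
          refine Finset.sum_le_sum fun j hj => ?_
          exact pow_le_one₀ (le_of_lt hx0) hcon
      _ = a := by simp
  rw [hpx] at this
  have h1 : (8:ℝ) * a ≤ N := by exact_mod_cast h8
  have h2 : (1:ℝ) ≤ a := by exact_mod_cast ha
  linarith

lemma hL2 : 2 ≤ Real.log ((N:ℝ)/a) := by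
  have h1 : (8:ℝ) * a ≤ N := by exact_mod_cast h8
  have h2 : (1:ℝ) ≤ a := by exact_mod_cast ha
  have h8' : (8:ℝ) ≤ (N:ℝ)/a := by
    rw [le_div_iff₀ (by linarith)]
    linarith
  have : Real.log 8 ≤ Real.log ((N:ℝ)/a) := Real.log_le_log (by norm_num) h8'
  have he : Real.exp 2 ≤ 8 := by
    have h9 := Real.exp_one_lt_d9
    have : Real.exp 2 = Real.exp 1 * Real.exp 1 := by
      rw [← Real.exp_add]; norm_num
    nlinarith [Real.exp_pos 1]
  have : (2:ℝ) ≤ Real.log 8 := by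
    rw [← Real.log_exp 2]
    exact Real.log_le_log (Real.exp_pos 2) he
  linarith

lemma hLax : Real.log ((N:ℝ)/a) ≤ (a:ℝ)*(x-1) := by
  have hx1' := hx1 ha h8 hx0 hpx
  have h2 : (1:ℝ) ≤ a := by exact_mod_cast ha
  have hNa : (N:ℝ)/a ≤ x^a := by
    rw [div_le_iff₀ (by linarith)]
    have := ineq_pp (a := a) (le_of_lt hx1')
    rw [hpx] at this
    linarith [this]
  have hpos : (0:ℝ) < (N:ℝ)/a := by
    have h1 : (8:ℝ) * a ≤ N := by exact_mod_cast h8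
    have h2' : (1:ℝ) ≤ a := by exact_mod_cast ha
    apply div_pos (by linarith) (by linarith)
  calc Real.log ((N:ℝ)/a) ≤ Real.log (x^a) := Real.log_le_log hpos hNa
    _ = a * Real.log x := by rw [Real.log_pow]
    _ ≤ a * (x-1) := by
        apply mul_le_mul_of_nonneg_left _ (by linarith)
        linarith [Real.log_le_sub_one_of_pos hx0]

lemma hax2 : 2 ≤ (a:ℝ)*(x-1) :=
  le_trans (hL2 ha h8 hx0 hpx) (hLax ha h8 hx0 hpx)

lemma hid : (x-1)*TT a x = (a:ℝ)*N*(x-1) + (a:ℝ)*x - N := by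
  have h1 := id_TTgeom a x
  have h2 := id_geom a x
  rw [hpx] at h1 h2
  have hxa : x^(a+1) = (x-1)*N + x := by linarith
  rw [h1, hxa]
  ring

lemma hTT2 : (a:ℝ)*N ≤ 2*TT a x := by
  have hx1' := hx1 ha h8 hx0 hpx
  have hax := hax2 ha h8 hx0 hpx
  have hid' := hid ha h8 hx0 hpx
  have hy : 0 < x - 1 := by linarith
  have hN0 : (0:ℝ) < N := by
    have h1 : (8:ℝ) * a ≤ N := by exact_mod_cast h8
    have h2 : (1:ℝ) ≤ a := by exact_mod_cast ha
    linarith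
  -- (x-1)*TT = a*N*(x-1) + a*x - N ≥ a*N*(x-1) - N ≥ a*N*(x-1)/2
  have key : (a:ℝ)*N*(x-1)/2 ≤ (x-1)*TT a x := by
    rw [hid']
    have haxN : (N:ℝ) ≤ (a:ℝ)*(x-1)*N/2 := by
      nlinarith
    have h2 : (1:ℝ) ≤ a := by exact_mod_cast ha
    nlinarith
  have h4 : ((a:ℝ)*N/2) * (x-1) ≤ (TT a x) * (x-1) := by linarith [key]
  have h5 := le_of_mul_le_mul_right h4 hy
  linarith

lemma est1 : |Eexpr a N x + (N:ℝ)^2/TT a x| ≤ 9 := by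
  have hx1' := hx1 ha h8 hx0 hpx
  have hxge : (1:ℝ) ≤ x := le_of_lt hx1'
  have hT2 := hTT2 ha h8 hx0 hpx
  have ht : 0 < TT a x := TT_pos ha hx0
  have hp1 : 0 < p1 a x := p1_pos ha hx0
  have hN0 : (0:ℝ) < N := by
    have h1 : (8:ℝ) * a ≤ N := by exact_mod_cast h8
    have h2 : (1:ℝ) ≤ a := by exact_mod_cast ha
    linarith
  have ha0 : (0:ℝ) < a := by exact_mod_cast ha
  have hP1 : p1 a x = TT a x / x := by
    rw [id_TT_p1 a x]
    field_simp
  set t := TT a x with htdef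
  have f1 := ineqT2 (a := a) hxge
  have f3 := ineqT1 (a := a) hxge
  have f4 := ineqP2 (a := a) hxge
  have hT1n := T1_nonneg (a := a) (le_of_lt hx0)
  have hT2n := T2_nonneg (a := a) (le_of_lt hx0)
  have hP2n := p2_nonneg (a := a) (le_of_lt hx0)
  -- rewrite Eexpr + N^2/t
  have hE : Eexpr a N x + (N:ℝ)^2/t = 1/2
      - (1/2)*( (T2 a x/t - (T1 a x/t)^2) * ((N:ℝ)*x/t)^2
        + (T1 a x/t) * (2*(N:ℝ)*x/t - (N:ℝ)^2*(p2 a x)*x^3/t^3) ) := by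
    unfold Eexpr
    rw [hP1, ← htdef]
    have hx0' : x ≠ 0 := ne_of_gt hx0
    have ht0 : t ≠ 0 := ne_of_gt ht
    field_simp
    ring
  rw [hE]
  -- bound the four pieces
  have g2' : ((a:ℝ)*(N:ℝ))^2 ≤ (2*t)^2 := by
    apply pow_le_pow_left₀ (by positivity) hT2
  have u1 : T2 a x * ((N:ℝ)*x)^2 ≤ 4 * t^3 := by
    have h1 : (x^2 * T2 a x) * (N:ℝ)^2 ≤ ((a:ℝ)^2 * t) * (N:ℝ)^2 :=
      mul_le_mul_of_nonneg_right f1 (by positivity)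
    have h3 : ((a:ℝ)*(N:ℝ))^2 * t ≤ (2*t)^2 * t :=
      mul_le_mul_of_nonneg_right g2' ht.le
    nlinarith [h1, h3]
  have u2 : (T1 a x)^2 * ((N:ℝ)*x)^2 ≤ 4 * t^4 := by
    have g1 : (x*T1 a x)^2 ≤ ((a:ℝ)*t)^2 := by
      apply pow_le_pow_left₀ (by positivity) f3
    have h1 : (x*T1 a x)^2 * (N:ℝ)^2 ≤ ((a:ℝ)*t)^2 * (N:ℝ)^2 :=
      mul_le_mul_of_nonneg_right g1 (by positivity)
    have h3 : ((a:ℝ)*(N:ℝ))^2 * t^2 ≤ (2*t)^2 * t^2 :=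
      mul_le_mul_of_nonneg_right g2' (by positivity)
    nlinarith [h1, h3]
  have u3 : T1 a x * (2*(N:ℝ)*x) ≤ 4 * t^2 := by
    have h1 : (x * T1 a x) * (N:ℝ) ≤ ((a:ℝ)*t) * N :=
      mul_le_mul_of_nonneg_right f3 hN0.le
    have h2 : ((a:ℝ)*(N:ℝ)) * t ≤ (2*t) * t :=
      mul_le_mul_of_nonneg_right hT2 ht.le
    nlinarith [h1, h2]
  have u4 : T1 a x * ((N:ℝ)^2 * p2 a x * x^3) ≤ 4 * t^4 := by
    have g1 : (x*T1 a x)*(x^2*p2 a x) ≤ ((a:ℝ)*t)*((a:ℝ)*t) :=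
      mul_le_mul f3 f4 (by positivity) (by positivity)
    have h1 : ((x*T1 a x)*(x^2*p2 a x)) * (N:ℝ)^2 ≤ (((a:ℝ)*t)*((a:ℝ)*t)) * (N:ℝ)^2 :=
      mul_le_mul_of_nonneg_right g1 (by positivity)
    have h3 : ((a:ℝ)*(N:ℝ))^2 * t^2 ≤ (2*t)^2 * t^2 :=
      mul_le_mul_of_nonneg_right g2' (by positivity)
    nlinarith [h1, h3]
  have expand : (T2 a x/t - (T1 a x/t)^2) * ((N:ℝ)*x/t)^2
      + (T1 a x/t) * (2*(N:ℝ)*x/t - (N:ℝ)^2*(p2 a x)*x^3/t^3)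
      = (T2 a x/t) * ((N:ℝ)*x/t)^2 - (T1 a x/t)^2 * ((N:ℝ)*x/t)^2
        + (T1 a x/t) * (2*(N:ℝ)*x/t) - (T1 a x/t) * ((N:ℝ)^2*(p2 a x)*x^3/t^3) := by
    ring
  have ht3 : (0:ℝ) < t^3 := by positivity
  have ht4 : (0:ℝ) < t^4 := by positivity
  have ht2 : (0:ℝ) < t^2 := by positivity
  have v1 : 0 ≤ (T2 a x/t) * ((N:ℝ)*x/t)^2 ∧ (T2 a x/t) * ((N:ℝ)*x/t)^2 ≤ 4 := by
    constructor
    · positivity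
    · have e : (T2 a x/t) * ((N:ℝ)*x/t)^2 = (T2 a x * ((N:ℝ)*x)^2)/t^3 := by
        rw [div_pow, div_mul_div_comm]; ring_nf
      rw [e, div_le_iff₀ ht3]
      linarith [u1]
  have v2 : 0 ≤ (T1 a x/t)^2 * ((N:ℝ)*x/t)^2 ∧ (T1 a x/t)^2 * ((N:ℝ)*x/t)^2 ≤ 4 := by
    constructor
    · positivity
    · have e : (T1 a x/t)^2 * ((N:ℝ)*x/t)^2 = ((T1 a x)^2 * ((N:ℝ)*x)^2)/t^4 := by
        rw [div_pow, div_pow, div_mul_div_comm]; ring_nf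
      rw [e, div_le_iff₀ ht4]
      linarith [u2]
  have v3 : 0 ≤ (T1 a x/t) * (2*(N:ℝ)*x/t) ∧ (T1 a x/t) * (2*(N:ℝ)*x/t) ≤ 4 := by
    constructor
    · positivity
    · have e : (T1 a x/t) * (2*(N:ℝ)*x/t) = (T1 a x * (2*(N:ℝ)*x))/t^2 := by
        rw [div_mul_div_comm]; ring_nf
      rw [e, div_le_iff₀ ht2]
      linarith [u3]
  have v4 : 0 ≤ (T1 a x/t) * ((N:ℝ)^2*(p2 a x)*x^3/t^3) ∧
      (T1 a x/t) * ((N:ℝ)^2*(p2 a x)*x^3/t^3) ≤ 4 := by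
    constructor
    · positivity
    · have e : (T1 a x/t) * ((N:ℝ)^2*(p2 a x)*x^3/t^3)
          = (T1 a x * ((N:ℝ)^2 * p2 a x * x^3))/t^4 := by
        rw [div_mul_div_comm]; ring_nf
      rw [e, div_le_iff₀ ht4]
      linarith [u4]
  rw [expand, abs_le]
  obtain ⟨w1,w1'⟩ := v1
  obtain ⟨w2,w2'⟩ := v2
  obtain ⟨w3,w3'⟩ := v3
  obtain ⟨w4,w4'⟩ := v4
  constructor <;> linarith

lemma basics : (0:ℝ) < a ∧ (0:ℝ) < N ∧ 0 < x - 1 ∧ 0 < TT a x ∧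
    2 ≤ (a:ℝ)*(x-1) ∧ (a:ℝ)*N ≤ 2*TT a x := by
  have h1 : (8:ℝ) * a ≤ N := by exact_mod_cast h8
  have h2 : (1:ℝ) ≤ a := by exact_mod_cast ha
  have hx1' := hx1 ha h8 hx0 hpx
  exact ⟨by linarith, by linarith, by linarith, TT_pos ha hx0,
    hax2 ha h8 hx0 hpx, hTT2 ha h8 hx0 hpx⟩

lemma hD_prop : 2 ≤ (a:ℝ)*(x-1) + (a:ℝ)*x/N ∧
    0 < 1/((a:ℝ)*(x-1) + (a:ℝ)*x/N) ∧ 1/((a:ℝ)*(x-1) + (a:ℝ)*x/N) ≤ 1/2 := by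
  obtain ⟨ha0, hN0, hy, ht, hax, hT2⟩ := basics ha h8 hx0 hpx
  have hD2 : 2 ≤ (a:ℝ)*(x-1) + (a:ℝ)*x/N := by
    have : 0 < (a:ℝ)*x/N := by positivity
    linarith
  have hD0 : 0 < (a:ℝ)*(x-1) + (a:ℝ)*x/N := by linarith
  refine ⟨hD2, by positivity, ?_⟩
  rw [div_le_div_iff₀ hD0 (by norm_num)]
  linarith

lemma htsum : ∑' (j:ℕ), (1/((a:ℝ)*(x-1)+(a:ℝ)*x/N))^j
    = (1 - 1/((a:ℝ)*(x-1)+(a:ℝ)*x/N))⁻¹ := by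
  obtain ⟨hD2, hr0, hr2⟩ := hD_prop ha h8 hx0 hpx
  exact tsum_geometric_of_lt_one hr0.le (by linarith)

lemma heq1 : (N:ℝ)/a * (1 - 1/((a:ℝ)*(x-1) + (a:ℝ)*x/N))⁻¹
    = (N:ℝ)^2/TT a x + (N:ℝ)*x/((x-1)*TT a x) := by
  obtain ⟨ha0, hN0, hy, ht, hax, hT2⟩ := basics ha h8 hx0 hpx
  obtain ⟨hD2, hr0, hr2⟩ := hD_prop ha h8 hx0 hpx
  have hid' := hid ha h8 hx0 hpx
  have hD0 : 0 < (a:ℝ)*(x-1) + (a:ℝ)*x/N := by linarith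
  have hDm1 : ((a:ℝ)*(x-1) + (a:ℝ)*x/N) - 1 = (x-1)*TT a x/N := by
    field_simp
    linarith [hid']
  have hD1 : 1 - 1/((a:ℝ)*(x-1) + (a:ℝ)*x/N)
      = ((x-1)*TT a x/N)/((a:ℝ)*(x-1) + (a:ℝ)*x/N) := by
    rw [← hDm1]
    field_simp
  rw [hD1, inv_div]
  field_simp

lemma hb4 : |(N:ℝ)*x/((x-1)*TT a x)| ≤ 4 := by
  obtain ⟨ha0, hN0, hy, ht, hax, hT2⟩ := basics ha h8 hx0 hpx
  have hpos : 0 < (N:ℝ)*x/((x-1)*TT a x) := by positivity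
  rw [abs_of_pos hpos, div_le_iff₀ (by positivity)]
  rcases le_or_gt 2 x with h2 | h2
  · have h1 : x ≤ 2*(x-1) := by linarith
    have ha1 : (1:ℝ) ≤ a := by exact_mod_cast ha
    have hN2t : (N:ℝ) ≤ 2*TT a x := by
      nlinarith [mul_nonneg (by linarith : (0:ℝ) ≤ (a:ℝ)-1) hN0.le]
    have c1 : (N:ℝ)*x ≤ (N:ℝ)*(2*(x-1)) := mul_le_mul_of_nonneg_left h1 hN0.le
    have c2 : (N:ℝ)*(2*(x-1)) ≤ (2*TT a x)*(2*(x-1)) :=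
      mul_le_mul_of_nonneg_right hN2t (by linarith)
    nlinarith [c1, c2]
  · have c0 : 2*TT a x ≤ ((a:ℝ)*(x-1))*TT a x := mul_le_mul_of_nonneg_right hax ht.le
    have c1 : (a:ℝ)*(N:ℝ) ≤ (a:ℝ)*((x-1)*TT a x) := by nlinarith
    have c2 : (N:ℝ) ≤ (x-1)*TT a x := le_of_mul_le_mul_left c1 ha0
    have c3 : (N:ℝ)*x ≤ (N:ℝ)*2 := mul_le_mul_of_nonneg_left h2.le hN0.le
    nlinarith [c2, c3]

lemma est_main : |Eexpr a N x + (N:ℝ)/a *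
    (∑' (j:ℕ), (1/((a:ℝ)*(x-1)+(a:ℝ)*x/N))^j)| ≤ 13 := by
  rw [htsum ha h8 hx0 hpx]
  have h1 := heq1 ha h8 hx0 hpx
  have h2 := est1 ha h8 hx0 hpx
  have h3 := hb4 ha h8 hx0 hpx
  have e : Eexpr a N x + (N:ℝ)/a * (1 - 1/((a:ℝ)*(x-1) + (a:ℝ)*x/N))⁻¹
      = (Eexpr a N x + (N:ℝ)^2/TT a x) + (N:ℝ)*x/((x-1)*TT a x) := by
    rw [h1]; ring
  rw [e]
  calc |(Eexpr a N x + (N:ℝ)^2/TT a x) + (N:ℝ)*x/((x-1)*TT a x)|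
      ≤ |Eexpr a N x + (N:ℝ)^2/TT a x| + |(N:ℝ)*x/((x-1)*TT a x)| := abs_add_le _ _
    _ ≤ 13 := by linarith

lemma r0_le : 1/((a:ℝ)*(x-1)) ≤ 1/Real.log ((N:ℝ)/a) := by
  obtain ⟨ha0, hN0, hy, ht, hax, hT2⟩ := basics ha h8 hx0 hpx
  have hL := hL2 ha h8 hx0 hpx
  exact one_div_le_one_div_of_le (by linarith) (hLax ha h8 hx0 hpx)

lemma f5 (ha2 : 2 ≤ a) : (a:ℝ)*x/N ≤ 2*(a:ℝ)/N + 2*Real.log N/Real.sqrt N := by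
  obtain ⟨ha0, hN0, hy, ht, hax, hT2⟩ := basics ha h8 hx0 hpx
  have hN1 : (1:ℝ) ≤ N := by
    have k1 : (8:ℝ) * a ≤ N := by exact_mod_cast h8
    have k2 : (1:ℝ) ≤ a := by exact_mod_cast ha
    linarith
  have hlogN : 0 ≤ Real.log N := Real.log_nonneg hN1
  have hsq : 0 < Real.sqrt N := Real.sqrt_pos.mpr hN0
  rcases le_or_gt x 2 with h2 | h2
  · have hnum : (a:ℝ)*x ≤ 2*(a:ℝ) := by nlinarith
    have hmain : (a:ℝ)*x/N ≤ 2*(a:ℝ)/N := by gcongr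
    have hpos : 0 ≤ 2*Real.log N/Real.sqrt N := by positivity
    linarith
  · have hxge1 : (1:ℝ) ≤ x := by linarith
    have hxa : x^a ≤ (N:ℝ) := by
      rw [← hpx]
      unfold pp
      apply Finset.single_le_sum (f := fun j => x^j)
        (fun j _ => pow_nonneg hx0.le j)
      exact Finset.mem_Icc.mpr ⟨ha, le_refl a⟩
    have halog : (a:ℝ) ≤ 2*Real.log N := by
      have l1 : (a:ℝ) * Real.log x ≤ Real.log N := by
        rw [← Real.log_pow]
        exact Real.log_le_log (by positivity) hxa
      have l2 : Real.log 2 ≤ Real.log x := Real.log_le_log (by norm_num) h2.le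
      have l3 : (0.6931471803:ℝ) < Real.log 2 := Real.log_two_gt_d9
      nlinarith
    have hxsq : x ≤ Real.sqrt N := by
      apply Real.le_sqrt_of_sq_le
      calc x^2 ≤ x^a := pow_le_pow_right₀ hxge1 ha2
        _ ≤ N := hxa
    have hmain : (a:ℝ)*x/N ≤ 2*Real.log N/Real.sqrt N := by
      rw [div_le_div_iff₀ hN0 hsq]
      have c1 : (a:ℝ)*x ≤ (2*Real.log N)*Real.sqrt N :=
        mul_le_mul halog hxsq hx0.le (by positivity)
      have c2 : (a:ℝ)*x*Real.sqrt N ≤ ((2*Real.log N)*Real.sqrt N)*Real.sqrt N :=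
        mul_le_mul_of_nonneg_right c1 hsq.le
      have c3 : Real.sqrt N * Real.sqrt N = (N:ℝ) := Real.mul_self_sqrt hN0.le
      nlinarith [c2, c3]
    have hpos : 0 ≤ 2*(a:ℝ)/N := by positivity
    linarith

lemma est2 : |(N:ℝ)/a * ((∑ j ∈ Finset.range 3, (1/((a:ℝ)*(x-1)))^j)
    - (∑' (j:ℕ), (1/((a:ℝ)*(x-1)+(a:ℝ)*x/N))^j))|
    ≤ (2*((a:ℝ)*x/N) + 2*(1/((a:ℝ)*(x-1)))) * ((N:ℝ)/((a:ℝ)^3*(x-1)^2)) := by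
  obtain ⟨ha0, hN0, hy, ht, hax, hT2⟩ := basics ha h8 hx0 hpx
  obtain ⟨hDD2, hr0pos, hrhalf⟩ := hD_prop ha h8 hx0 hpx
  rw [htsum ha h8 hx0 hpx]
  set d0 := (a:ℝ)*(x-1) with hd0def
  set D := (a:ℝ)*(x-1) + (a:ℝ)*x/N with hDdef
  have hd0 : 2 ≤ d0 := hax
  have hd0pos : 0 < d0 := by linarith
  have hDpos : 0 < D := by linarith
  have hd0D : d0 ≤ D := by
    have : 0 < (a:ℝ)*x/N := by positivity
    rw [hDdef]; linarith
  set r0 := 1/d0 with hr0def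
  set r := 1/D with hrdef
  have hr0p : 0 < r0 := by positivity
  have hrp : 0 < r := by positivity
  have hrler0 : r ≤ r0 := one_div_le_one_div_of_le hd0pos hd0D
  have hr0h : r0 ≤ 1/2 := by
    rw [hr0def, div_le_div_iff₀ hd0pos (by norm_num)]; linarith
  have hrh : r ≤ 1/2 := le_trans hrler0 hr0h
  have h1mr : 1/2 ≤ 1 - r := by linarith
  have h1mrpos : (0:ℝ) < 1 - r := by linarith
  have hS3 : ∑ j ∈ Finset.range 3, r0^j = 1 + r0 + r0^2 := by
    rw [Finset.sum_range_succ, Finset.sum_range_succ, Finset.sum_range_one]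
    ring
  have hinv : (1 - r)⁻¹ = 1 + r + r^2 + r^3/(1-r) := by
    field_simp
    ring
  have hsN : 0 ≤ (a:ℝ)*x/N := by positivity
  have hb1 : r0 - r ≤ ((a:ℝ)*x/N) * r0^2 := by
    have e1 : r0 - r = ((a:ℝ)*x/N)/(D*d0) := by
      rw [hr0def, hrdef]
      rw [div_sub_div _ _ (ne_of_gt hd0pos) (ne_of_gt hDpos)]
      congr 1
      · rw [hDdef, hd0def]; ring
      · ring
    rw [e1]
    have e2 : ((a:ℝ)*x/N)/(d0*d0) = ((a:ℝ)*x/N) * r0^2 := by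
      rw [hr0def, div_pow, one_pow, sq, mul_one_div]
    rw [← e2]
    apply div_le_div_of_nonneg_left hsN (by positivity) ?_
    nlinarith [hd0D, hd0pos, hDpos]
  have hb0 : 0 ≤ r0 - r := by linarith
  have hb2 : r0^2 - r^2 ≤ ((a:ℝ)*x/N) * r0^2 := by
    have hsum1 : r0 + r ≤ 1 := by linarith
    have e := mul_le_mul_of_nonneg_right hsum1 hb0
    nlinarith [e, hb1]
  have hb2' : 0 ≤ r0^2 - r^2 := by nlinarith [hrler0, hrp.le]
  have hb3 : r^3/(1-r) ≤ 2*(r0*r0^2) := by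
    have c1 : r^3 ≤ r0^3 := pow_le_pow_left₀ hrp.le hrler0 3
    have c2 : r^3/(1-r) ≤ r^3/(1/2) :=
      div_le_div_of_nonneg_left (by positivity) (by norm_num) h1mr
    have c3 : r^3/(1/2) = 2*r^3 := by ring
    nlinarith [c1, c2, c3]
  have hb3' : 0 ≤ r^3/(1-r) := by positivity
  have hDel1 : (1 + r0 + r0^2) - (1-r)⁻¹ ≤ 2*(((a:ℝ)*x/N) * r0^2) + 2*(r0*r0^2) := by
    rw [hinv]
    nlinarith [hb1, hb2, hb3', mul_nonneg hsN (sq_nonneg r0),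
      mul_nonneg hr0p.le (sq_nonneg r0)]
  have hDel2 : -(2*(((a:ℝ)*x/N) * r0^2) + 2*(r0*r0^2)) ≤ (1 + r0 + r0^2) - (1-r)⁻¹ := by
    rw [hinv]
    nlinarith [hb0, hb2', hb3, mul_nonneg hsN (sq_nonneg r0),
      mul_nonneg hr0p.le (sq_nonneg r0)]
  have habs : |1 + r0 + r0^2 - (1-r)⁻¹| ≤ 2*(((a:ℝ)*x/N) * r0^2) + 2*(r0*r0^2) := by
    rw [abs_le]; exact ⟨hDel2, hDel1⟩
  rw [hS3, abs_mul]
  have hNa : |(N:ℝ)/a| = (N:ℝ)/a := abs_of_pos (by positivity)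
  rw [hNa]
  have key : (N:ℝ)/a * |1 + r0 + r0^2 - (1-r)⁻¹|
      ≤ (N:ℝ)/a * (2*(((a:ℝ)*x/N) * r0^2) + 2*(r0*r0^2)) :=
    mul_le_mul_of_nonneg_left habs (by positivity)
  have final : (N:ℝ)/a * (2*(((a:ℝ)*x/N) * r0^2) + 2*(r0*r0^2))
      = (2*((a:ℝ)*x/N) + 2*r0) * ((N:ℝ)/((a:ℝ)^3*(x-1)^2)) := by
    rw [hr0def, hd0def]
    field_simp
  linarith [key, final.le, final.ge]

end Est

end

end Stmt17



open Filter Real Asymptotics in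
/-- asymptotics of `h̃''_{n,α}(1)`.  Assume `α(n)/n → 0`.
Here `x n w = x_{n,α}(w)` is the positive solution of `∑_{j=1}^{α(n)} x^j = n/w`,
`h̃ n w = w ∑_{j=1}^{α(n)} x(w)^j/j − n log x(w) − (1/2) log(2πw ∑ j x(w)^j)`,
and we write `x = x n 1`, `a = α n`.  Then:
(i) the geometric series `∑_{j≥0} (1/(a(x−1) + a x/n))^j` converges for large `n`
    and `h̃''(1) = −(n/a)·∑_{j=0}^∞ (1/(a(x−1) + a x/n))^j + O(1)`;
(ii) if moreover `a ≥ 2` for all large `n`, then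
    `h̃''(1) = −(n/a)·∑_{j=0}^2 (1/(a(x−1)))^j + o(n/(a³(x−1)²)) + O(1)`. -/
theorem stmt_17 (α : ℕ → ℕ) (hα : ∀ n, 1 ≤ α n)
    (hαn : Tendsto (fun n : ℕ => (α n : ℝ) / n) atTop (nhds 0))
    (x : ℕ → ℝ → ℝ)
    (hx : ∀ n, 1 ≤ n → ∀ w : ℝ, 0 < w →
      0 < x n w ∧ ∑ j ∈ Finset.Icc 1 (α n), x n w ^ j = (n : ℝ) / w)
    (h : ℕ → ℝ → ℝ)
    (hh : ∀ n, ∀ w : ℝ, 0 < w →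
      h n w = w * ∑ j ∈ Finset.Icc 1 (α n), x n w ^ j / j - (n : ℝ) * Real.log (x n w)
        - 1 / 2 * Real.log (2 * π * w * ∑ j ∈ Finset.Icc 1 (α n), (j : ℝ) * x n w ^ j)) :
    ((∀ᶠ n : ℕ in atTop,
        |1 / ((α n : ℝ) * (x n 1 - 1) + (α n : ℝ) * x n 1 / n)| < 1) ∧
      (fun n : ℕ => iteratedDeriv 2 (h n) 1 + (n : ℝ) / α n *
          ∑' j : ℕ, (1 / ((α n : ℝ) * (x n 1 - 1) + (α n : ℝ) * x n 1 / n)) ^ j)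
        =O[atTop] fun _ : ℕ => (1 : ℝ)) ∧
    ((∀ᶠ n : ℕ in atTop, 2 ≤ α n) →
      ∃ e₁ e₂ : ℕ → ℝ,
        (e₁ =o[atTop] fun n : ℕ => (n : ℝ) / ((α n : ℝ) ^ 3 * (x n 1 - 1) ^ 2)) ∧
        (e₂ =O[atTop] fun _ : ℕ => (1 : ℝ)) ∧
        ∀ n : ℕ, iteratedDeriv 2 (h n) 1 = -((n : ℝ) / α n) *
            (∑ j ∈ Finset.range 3, (1 / ((α n : ℝ) * (x n 1 - 1))) ^ j)
          + e₁ n + e₂ n) := by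
  classical
  have hgood : ∀ᶠ n : ℕ in atTop, 1 ≤ n ∧ 8 * α n ≤ n := by
    have h1 := hαn.eventually (gt_mem_nhds (show (0:ℝ) < 1/9 by norm_num))
    filter_upwards [h1, eventually_ge_atTop 1] with n hn hn1
    refine ⟨hn1, ?_⟩
    have hn0 : (0:ℝ) < n := by exact_mod_cast hn1
    rw [div_lt_iff₀ hn0] at hn
    have ha0 : (0:ℝ) ≤ α n := by positivity
    have : ((8 * α n : ℕ) : ℝ) ≤ (n:ℝ) := by push_cast; nlinarith
    exact_mod_cast this
  have hpx : ∀ n, 1 ≤ n → Stmt17.pp (α n) (x n 1) = (n:ℝ) := by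
    intro n hn1
    have := (hx n hn1 1 one_pos).2
    rwa [div_one] at this
  have hder : ∀ n, 1 ≤ n → iteratedDeriv 2 (h n) 1 = Stmt17.Eexpr (α n) n (x n 1) := by
    intro n hn1
    exact Stmt17.iteratedDeriv_eq (hα n) hn1
      (fun w hw => hx n hn1 w hw) (fun w hw => hh n w hw)
  have hB : (fun n : ℕ => iteratedDeriv 2 (h n) 1 + (n : ℝ) / α n *
      ∑' j : ℕ, (1 / ((α n : ℝ) * (x n 1 - 1) + (α n : ℝ) * x n 1 / n)) ^ j)
      =O[atTop] fun _ : ℕ => (1 : ℝ) := by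
    rw [isBigO_iff]
    refine ⟨13, ?_⟩
    filter_upwards [hgood] with n hn
    obtain ⟨hn1, h8⟩ := hn
    rw [hder n hn1]
    have hmain := Stmt17.est_main (hα n) h8 (hx n hn1 1 one_pos).1 (hpx n hn1)
    simpa [Real.norm_eq_abs] using hmain
  refine ⟨⟨?_, hB⟩, ?_⟩
  · filter_upwards [hgood] with n hn
    obtain ⟨hn1, h8⟩ := hn
    obtain ⟨hD2, hr0, hrh⟩ := Stmt17.hD_prop (hα n) h8 (hx n hn1 1 one_pos).1 (hpx n hn1)
    rw [abs_of_pos hr0]; linarith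
  · intro ha2
    refine ⟨fun n => (n:ℝ)/α n * ((∑ j ∈ Finset.range 3, (1/((α n:ℝ)*(x n 1 - 1)))^j)
        - ∑' j:ℕ, (1/((α n:ℝ)*(x n 1 - 1)+(α n:ℝ)*(x n 1)/n))^j),
      fun n => iteratedDeriv 2 (h n) 1 + (n : ℝ) / α n *
        ∑' j : ℕ, (1 / ((α n : ℝ) * (x n 1 - 1) + (α n : ℝ) * x n 1 / n)) ^ j,
      ?_, hB, ?_⟩
    · -- little-o
      -- limit of the coefficient
      have tB : Tendsto (fun n : ℕ => Real.log (n:ℝ)/Real.sqrt (n:ℝ)) atTop (𝓝 0) := by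
        have h0 : Tendsto (fun t : ℝ => Real.log t/t^((1:ℝ)/2)) atTop (𝓝 0) :=
          (isLittleO_log_rpow_atTop (by norm_num)).tendsto_div_nhds_zero
        have h1 := h0.comp tendsto_natCast_atTop_atTop (α := ℕ)
        apply h1.congr
        intro n
        simp only [Function.comp]
        rw [Real.sqrt_eq_rpow]
      have tC : Tendsto (fun n : ℕ => 1/Real.log ((n:ℝ)/α n)) atTop (𝓝 0) := by
        have hmem : ∀ᶠ n : ℕ in atTop, (α n : ℝ)/n ∈ Set.Ioi (0:ℝ) := by
          filter_upwards [eventually_ge_atTop 1] with n hn1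
          have h1 : (0:ℝ) < α n := by exact_mod_cast hα n
          have h2 : (0:ℝ) < n := by exact_mod_cast hn1
          exact div_pos h1 h2
        have h1 : Tendsto (fun n : ℕ => (α n : ℝ)/n) atTop (𝓝[>] 0) :=
          tendsto_nhdsWithin_of_tendsto_nhds_of_eventually_within _ hαn hmem
        have h2 : Tendsto (fun n : ℕ => ((α n : ℝ)/n)⁻¹) atTop atTop :=
          (tendsto_inv_nhdsGT_zero).comp h1
        have h3 : Tendsto (fun n : ℕ => (n:ℝ)/α n) atTop atTop := by
          apply h2.congr
          intro n
          rw [inv_div]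
        have h4 : Tendsto (fun n : ℕ => Real.log ((n:ℝ)/α n)) atTop atTop :=
          Real.tendsto_log_atTop.comp h3
        have h5 := h4.inv_tendsto_atTop
        apply h5.congr
        intro n
        simp [one_div]
      have hc : Tendsto (fun n : ℕ => 2*(2*(α n:ℝ)/(n:ℝ) + 2*Real.log (n:ℝ)/Real.sqrt (n:ℝ))
          + 2*(1/Real.log ((n:ℝ)/α n))) atTop (𝓝 0) := by
        have e1 : Tendsto (fun n : ℕ => 2*(α n:ℝ)/(n:ℝ)) atTop (𝓝 0) := by
          have := hαn.const_mul 2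
          simp only [mul_zero] at this
          apply this.congr
          intro n; ring
        have e2 : Tendsto (fun n : ℕ => 2*Real.log (n:ℝ)/Real.sqrt (n:ℝ)) atTop (𝓝 0) := by
          have := tB.const_mul 2
          simp only [mul_zero] at this
          apply this.congr
          intro n; ring
        have e3 := (e1.add e2).const_mul 2
        have e4 := tC.const_mul 2
        simp only [add_zero, mul_zero] at e3 e4
        have := e3.add e4
        simpa using this
      rw [isLittleO_iff]
      intro ε hε
      filter_upwards [hgood, ha2, hc.eventually_lt_const hε] with n hg hg2 hcn
      obtain ⟨hn1, h8⟩ := hg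
      have hx1 := (hx n hn1 1 one_pos).1
      have hest := Stmt17.est2 (hα n) h8 hx1 (hpx n hn1)
      have hf5 := Stmt17.f5 (hα n) h8 hx1 (hpx n hn1) hg2
      have hr0le := Stmt17.r0_le (hα n) h8 hx1 (hpx n hn1)
      obtain ⟨ha0, hN0, hy, ht, hax, hT2⟩ := Stmt17.basics (hα n) h8 hx1 (hpx n hn1)
      have hgpos : 0 < (n:ℝ)/((α n:ℝ)^3*(x n 1 - 1)^2) := by positivity
      have hco : 2*((α n:ℝ)*(x n 1)/n) + 2*(1/((α n:ℝ)*(x n 1 - 1)))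
          ≤ 2*(2*(α n:ℝ)/(n:ℝ) + 2*Real.log (n:ℝ)/Real.sqrt (n:ℝ))
            + 2*(1/Real.log ((n:ℝ)/α n)) := by
        linarith [hf5, hr0le]
      have step1 : |(n:ℝ)/α n * ((∑ j ∈ Finset.range 3, (1/((α n:ℝ)*(x n 1 - 1)))^j)
          - ∑' j:ℕ, (1/((α n:ℝ)*(x n 1 - 1)+(α n:ℝ)*(x n 1)/n))^j)|
          ≤ (2*(2*(α n:ℝ)/(n:ℝ) + 2*Real.log (n:ℝ)/Real.sqrt (n:ℝ))
            + 2*(1/Real.log ((n:ℝ)/α n))) * ((n:ℝ)/((α n:ℝ)^3*(x n 1 - 1)^2)) := by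
        calc |(n:ℝ)/α n * _| ≤ _ := hest
          _ ≤ _ := mul_le_mul_of_nonneg_right hco hgpos.le
      have step2 : (2*(2*(α n:ℝ)/(n:ℝ) + 2*Real.log (n:ℝ)/Real.sqrt (n:ℝ))
            + 2*(1/Real.log ((n:ℝ)/α n))) * ((n:ℝ)/((α n:ℝ)^3*(x n 1 - 1)^2))
          ≤ ε * ((n:ℝ)/((α n:ℝ)^3*(x n 1 - 1)^2)) :=
        mul_le_mul_of_nonneg_right hcn.le hgpos.le
      have : ‖(n:ℝ)/((α n:ℝ)^3*(x n 1 - 1)^2)‖ = (n:ℝ)/((α n:ℝ)^3*(x n 1 - 1)^2) := by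
        rw [Real.norm_eq_abs, abs_of_pos hgpos]
      rw [Real.norm_eq_abs, this]
      calc |_| ≤ _ := step1
        _ ≤ _ := step2
    · intro n
      ring
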